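/- Let p be an odd prime and (e_1,...,e_n) a sequence of nonnegative integers. In F_p[y_1,...,y_n]: [e_1,...,e_{n-1}, e_n+n-1] = Σ_{s=0}^{n-2} (-1)^{n+s} [e_1,...,e_{n-1}, e_n+s] · Q_{n-1,s}^{p^{e_n}} + [e_1,...,e_{n-1}] · V_n^{p^{e_n}}, where [e_1,...,e_{n-1}] is the (n-1)×(n-1) determinant in y_1,...,y_{n-1}, Q_{n-1,s} are Dickson invariants in y_1,...,y_{n-1}, and V_n = L_n/L_{n-1}. -/

import Mathlib

open MvPolynomial Finset

/-- `br p e = det (y_i ^ (p ^ e_j))` in `F_p[y_1,…,y_n]`. -/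
noncomputable def br (p : ℕ) {n : ℕ} (e : Fin n → ℕ) : MvPolynomial (Fin n) (ZMod p) :=
  Matrix.det (Matrix.of fun i j : Fin n => (X i : MvPolynomial (Fin n) (ZMod p)) ^ p ^ e j)

/-- `L_n = [0,1,…,n-1]`. -/
noncomputable def Lpoly (p n : ℕ) : MvPolynomial (Fin n) (ZMod p) :=
  br p (fun j : Fin n => (j : ℕ))

/-- `L_{n,s} = [0,…,ŝ,…,n]`. -/
noncomputable def Ls (p n s : ℕ) : MvPolynomial (Fin n) (ZMod p) :=
  br p (fun j : Fin n => if (j : ℕ) < s then (j : ℕ) else (j : ℕ) + 1)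

lemma coe_succAbove {n : ℕ} (s : Fin (n + 1)) (b : Fin n) :
    ((s.succAbove b : Fin (n + 1)) : ℕ) = if (b : ℕ) < (s : ℕ) then (b : ℕ) else (b : ℕ) + 1 := by
  rw [Fin.succAbove]
  split_ifs with h1 h2 h2 <;> simp_all [Fin.lt_def]

lemma Ls_last (p n : ℕ) : Ls p n n = Lpoly p n := by
  unfold Ls Lpoly
  congr 1
  funext j
  exact if_pos j.isLt

lemma minor_eq (p n : ℕ) (x : MvPolynomial (Fin (n + 1)) (ZMod p)) (s : Fin (n + 1)) :
    (((Matrix.of fun a j : Fin (n + 1) =>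
        (if a = Fin.last n then x else X a) ^ p ^ (j : ℕ))).submatrix
          (Fin.last n).succAbove s.succAbove).det =
      rename Fin.castSucc (Ls p n (s : ℕ)) := by
  rw [Ls, br, AlgHom.map_det]
  congr 1
  ext a b
  simp only [Matrix.submatrix_apply, AlgHom.mapMatrix_apply, Matrix.map_apply, Matrix.of_apply,
    Fin.succAbove_last, Fin.succAbove_last_apply]
  rw [if_neg (Fin.castSucc_lt_last a).ne, map_pow, rename_X, coe_succAbove]

lemma moore_row_expand (p n : ℕ) (x : MvPolynomial (Fin (n + 1)) (ZMod p)) :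
    (Matrix.of fun a j : Fin (n + 1) =>
        (if a = Fin.last n then x else X a) ^ p ^ (j : ℕ)).det =
      ∑ s : Fin (n + 1), (-1 : MvPolynomial (Fin (n + 1)) (ZMod p)) ^ (n + (s : ℕ)) *
        x ^ p ^ (s : ℕ) * rename Fin.castSucc (Ls p n (s : ℕ)) := by
  rw [Matrix.det_succ_row _ (Fin.last n)]
  refine Finset.sum_congr rfl fun s _ => ?_
  rw [minor_eq]
  simp

lemma moore_split (p n : ℕ) (x : MvPolynomial (Fin (n + 1)) (ZMod p)) :
    rename Fin.castSucc (Lpoly p n) * x ^ p ^ n =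
      (Matrix.of fun a j : Fin (n + 1) =>
        (if a = Fin.last n then x else X a) ^ p ^ (j : ℕ)).det
      + ∑ s : Fin n, (-1 : MvPolynomial (Fin (n + 1)) (ZMod p)) ^ (n + 1 + (s : ℕ)) *
          x ^ p ^ (s : ℕ) * rename Fin.castSucc (Ls p n (s : ℕ)) := by
  rw [moore_row_expand, Fin.sum_univ_castSucc]
  have h1 : ((Fin.last n : Fin (n + 1)) : ℕ) = n := Fin.val_last n
  have h2 : (-1 : MvPolynomial (Fin (n + 1)) (ZMod p)) ^ (n + n) = 1 :=
    Even.neg_one_pow ⟨n, rfl⟩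
  have h3 : ∀ s : Fin n, (-1 : MvPolynomial (Fin (n + 1)) (ZMod p)) ^ (n + 1 + (s : ℕ))
      = -(-1 : MvPolynomial (Fin (n + 1)) (ZMod p)) ^ (n + (s : ℕ)) := by
    intro s
    rw [show n + 1 + (s : ℕ) = (n + (s : ℕ)) + 1 by ring, pow_succ, mul_neg_one]
  simp only [h1, h2, Fin.coe_castSucc, Ls_last, one_mul, h3, neg_mul,
    Finset.sum_neg_distrib]
  ring

lemma key_lemma (p n m : ℕ) [Fact p.Prime] (hodd : Odd p)
    (x : MvPolynomial (Fin (n + 1)) (ZMod p)) :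
    (rename Fin.castSucc (Lpoly p n)) ^ p ^ m * x ^ p ^ (m + n) =
      ((Matrix.of fun a j : Fin (n + 1) =>
        (if a = Fin.last n then x else X a) ^ p ^ (j : ℕ)).det) ^ p ^ m
      + ∑ s : Fin n, ((-1 : MvPolynomial (Fin (n + 1)) (ZMod p)) ^ (n + 1 + (s : ℕ)) *
          (rename Fin.castSucc (Ls p n (s : ℕ))) ^ p ^ m) * x ^ p ^ (m + (s : ℕ)) := by
  have hsign : ∀ k : ℕ,
      ((-1 : MvPolynomial (Fin (n + 1)) (ZMod p)) ^ k) ^ p ^ m = (-1) ^ k := by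
    intro k
    rw [pow_right_comm, Odd.neg_one_pow (hodd.pow)]
  have hx : ∀ k : ℕ, (x ^ p ^ k) ^ p ^ m = x ^ p ^ (m + k) := by
    intro k
    rw [← pow_mul, ← pow_add, Nat.add_comm k m]
  have h0 := congrArg (iterateFrobenius (MvPolynomial (Fin (n + 1)) (ZMod p)) p m)
    (moore_split p n x)
  simp only [map_mul, map_add, map_sum, iterateFrobenius_def, mul_pow, hsign, hx] at h0
  rw [h0]
  congr 1
  refine Finset.sum_congr rfl fun s _ => ?_
  ring
lemma prod_monomial_one {σ : Type*} {R : Type*} [CommSemiring R] {ι : Type*} (s : Finset ι)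
    (g : ι → (σ →₀ ℕ)) :
    ∏ i ∈ s, (monomial (g i) (1 : R)) = monomial (∑ i ∈ s, g i) 1 := by
  induction s using Finset.cons_induction with
  | empty => simp
  | cons a t ha ih => rw [Finset.prod_cons, Finset.sum_cons, ih, monomial_mul, one_mul]

lemma sum_single_apply {p : ℕ} {n : ℕ} (e : Fin n → ℕ) (τ : Equiv.Perm (Fin n)) (k : Fin n) :
    (∑ j : Fin n, Finsupp.single (τ j) (p ^ e j)) (τ k) = p ^ e k := by
  rw [Finsupp.finset_sum_apply, Finset.sum_eq_single k]
  · simp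
  · intro b _ hb
    rw [Finsupp.single_apply, if_neg (fun h => hb (τ.injective h))]
  · simp

lemma br_ne_zero (p : ℕ) (hp : p.Prime) {n : ℕ} (e : Fin n → ℕ) (he : Function.Injective e) :
    br p e ≠ 0 := by
  haveI : Fact p.Prime := ⟨hp⟩
  intro h
  have hc : MvPolynomial.coeff (∑ j : Fin n, Finsupp.single j (p ^ e j)) (br p e) = 1 := by
    rw [br, Matrix.det_apply, MvPolynomial.coeff_sum]
    have hterm : ∀ σ : Equiv.Perm (Fin n),
        MvPolynomial.coeff (∑ j : Fin n, Finsupp.single j (p ^ e j))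
          (Equiv.Perm.sign σ • ∏ i, (Matrix.of fun i j : Fin n =>
            (X i : MvPolynomial (Fin n) (ZMod p)) ^ p ^ e j) (σ i) i)
          = Equiv.Perm.sign σ •
            (if (∑ j : Fin n, Finsupp.single (σ j) (p ^ e j)) =
                 ∑ j : Fin n, Finsupp.single j (p ^ e j) then (1 : ZMod p) else 0) := by
      intro σ
      rw [MvPolynomial.coeff_smul]
      congr 1
      simp only [Matrix.of_apply, X_pow_eq_monomial]
      rw [prod_monomial_one, MvPolynomial.coeff_monomial]
    rw [Finset.sum_congr rfl (fun σ _ => hterm σ)]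
    rw [Finset.sum_eq_single (1 : Equiv.Perm (Fin n))]
    · simp
    · intro σ _ hσ
      rw [if_neg, smul_zero]
      intro hEq
      apply hσ
      ext k
      have h1 := sum_single_apply (p := p) e σ k
      rw [hEq] at h1
      have h2 := sum_single_apply (p := p) e (1 : Equiv.Perm (Fin n)) (σ k)
      simp only [Equiv.Perm.one_apply] at h2
      rw [h2] at h1
      have h3 : e (σ k) = e k := Nat.pow_right_injective hp.two_le h1
      exact congrArg Fin.val (he h3)
    · simp
  rw [h] at hc
  simp at hc

lemma G_last (p n : ℕ) :
    (Matrix.of fun a j : Fin (n + 1) =>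
      ((if a = Fin.last n then X (Fin.last n) else X a) :
        MvPolynomial (Fin (n + 1)) (ZMod p)) ^ p ^ (j : ℕ)).det = Lpoly p (n + 1) := by
  rw [Lpoly, br]
  congr 1
  ext a j
  by_cases ha : a = Fin.last n <;> simp [ha]

lemma G_ne (p n : ℕ) (i : Fin (n + 1)) (hi : i ≠ Fin.last n) :
    (Matrix.of fun a j : Fin (n + 1) =>
      ((if a = Fin.last n then X i else X a) :
        MvPolynomial (Fin (n + 1)) (ZMod p)) ^ p ^ (j : ℕ)).det = 0 := by
  apply Matrix.det_zero_of_row_eq hi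
  funext j
  simp [hi]

lemma det_updateColumn_sum' {R : Type*} [CommRing R] {k : ℕ} (M : Matrix (Fin k) (Fin k) R)
    (j : Fin k) {ι : Type*} (t : Finset ι) (v : ι → Fin k → R) :
    (M.updateCol j (∑ s ∈ t, v s)).det = ∑ s ∈ t, (M.updateCol j (v s)).det := by
  induction t using Finset.cons_induction with
  | empty =>
    simp only [Finset.sum_empty]
    exact Matrix.det_eq_zero_of_column_eq_zero j (fun i => by simp [Matrix.updateCol_self])
  | cons a t ha ih =>
    rw [Finset.sum_cons, Matrix.det_updateCol_add, ih, Finset.sum_cons]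

lemma cofactor_eq (p n : ℕ) (e : Fin (n + 1) → ℕ)
    (u : Fin (n + 1) → MvPolynomial (Fin (n + 1)) (ZMod p)) :
    (((Matrix.of fun i j : Fin (n + 1) => (X i : MvPolynomial (Fin (n + 1)) (ZMod p)) ^
        p ^ (if j = Fin.last n then e j + n else e j)).updateCol (Fin.last n) u).submatrix
        Fin.castSucc Fin.castSucc).det
      = rename Fin.castSucc (br p (e ∘ Fin.castSucc)) := by
  rw [br, AlgHom.map_det]
  congr 1
  ext a b
  simp only [Matrix.submatrix_apply, AlgHom.mapMatrix_apply, Matrix.map_apply, Matrix.of_apply,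
    Function.comp_apply]
  rw [Matrix.updateCol_apply, if_neg (Fin.castSucc_lt_last b).ne, Matrix.of_apply,
    if_neg (Fin.castSucc_lt_last b).ne, map_pow, rename_X]


/-- (The paper's `n` is `n+1`.)  For a sequence `e : Fin (n+1) → ℕ`:
`[e_1,…,e_n, e_{n+1}+n] = Σ_{s=0}^{n-1} (-1)^{(n+1)+s} [e_1,…,e_n, e_{n+1}+s] · Q_{n,s}^{p^{e_{n+1}}}
  + [e_1,…,e_n] · V_{n+1}^{p^{e_{n+1}}}`,
where `Q_{n,s}` are Dickson invariants in the first `n` variables and `V_{n+1} = L_{n+1}/L_n`. -/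
theorem stmt5 (p n : ℕ) (hp : p.Prime) (hodd : Odd p) (e : Fin (n + 1) → ℕ)
    (Q : Fin n → MvPolynomial (Fin n) (ZMod p))
    (hQ : ∀ s : Fin n, Lpoly p n * Q s = Ls p n (s : ℕ))
    (V : MvPolynomial (Fin (n + 1)) (ZMod p))
    (hV : rename Fin.castSucc (Lpoly p n) * V = Lpoly p (n + 1)) :
    br p (fun j : Fin (n + 1) => if j = Fin.last n then e j + n else e j) =
      (∑ s : Fin n,
        (-1 : MvPolynomial (Fin (n + 1)) (ZMod p)) ^ (n + 1 + (s : ℕ)) *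
          br p (fun j : Fin (n + 1) => if j = Fin.last n then e j + (s : ℕ) else e j) *
          (rename Fin.castSucc (Q s)) ^ p ^ e (Fin.last n)) +
      rename Fin.castSucc (br p (e ∘ Fin.castSucc)) * V ^ p ^ e (Fin.last n) := by
  classical
  haveI : Fact p.Prime := ⟨hp⟩
  have hLne : (rename Fin.castSucc (Lpoly p n) : MvPolynomial (Fin (n + 1)) (ZMod p)) ≠ 0 := by
    intro h0
    exact br_ne_zero p hp _ Fin.val_injective
      (rename_injective Fin.castSucc (Fin.castSucc_injective n) (by rw [map_zero]; exact h0))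
  set L : MvPolynomial (Fin (n + 1)) (ZMod p) := rename Fin.castSucc (Lpoly p n) with hLdef
  apply mul_left_cancel₀ (pow_ne_zero (p ^ e (Fin.last n)) hLne)
  set A : Matrix (Fin (n + 1)) (Fin (n + 1)) (MvPolynomial (Fin (n + 1)) (ZMod p)) :=
    Matrix.of (fun i j => (X i : MvPolynomial (Fin (n + 1)) (ZMod p)) ^
      p ^ (if j = Fin.last n then e j + n else e j)) with hA
  have hbr : br p (fun j : Fin (n + 1) => if j = Fin.last n then e j + n else e j) = A.det := rfl
  have hcol : ∀ s : ℕ,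
      (A.updateCol (Fin.last n)
        (fun i => (X i : MvPolynomial (Fin (n + 1)) (ZMod p)) ^ p ^ (e (Fin.last n) + s))).det
        = br p (fun j : Fin (n + 1) => if j = Fin.last n then e j + s else e j) := by
    intro s
    rw [br]
    congr 1
    ext i j
    rw [Matrix.updateCol_apply]
    by_cases hj : j = Fin.last n
    · subst hj
      rw [if_pos rfl, Matrix.of_apply, if_pos rfl]
    · rw [if_neg hj, hA, Matrix.of_apply, Matrix.of_apply, if_neg hj, if_neg hj]
  have hFdet :
      (A.updateCol (Fin.last n) (fun i =>
        (Matrix.of fun a j : Fin (n + 1) =>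
          ((if a = Fin.last n then X i else X a) :
            MvPolynomial (Fin (n + 1)) (ZMod p)) ^ p ^ (j : ℕ)).det
          ^ p ^ e (Fin.last n))).det
      = rename Fin.castSucc (br p (e ∘ Fin.castSucc)) *
          (Lpoly p (n + 1)) ^ p ^ e (Fin.last n) := by
    rw [Matrix.det_succ_column _ (Fin.last n), Finset.sum_eq_single (Fin.last n)]
    · rw [Fin.succAbove_last]
      simp only [Matrix.updateCol_self, Fin.val_last]
      rw [G_last, hA, cofactor_eq,
        show ((-1 : MvPolynomial (Fin (n + 1)) (ZMod p)) ^ (n + n)) = 1 from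
          Even.neg_one_pow ⟨n, rfl⟩, one_mul]
      ring
    · intro i _ hi
      simp only [Matrix.updateCol_self]
      rw [G_ne p n i hi, zero_pow (pow_ne_zero _ hp.ne_zero), mul_zero, zero_mul]
    · intro h
      exact absurd (Finset.mem_univ _) h
  have rhs : L ^ p ^ e (Fin.last n) *
      ((∑ s : Fin n, (-1 : MvPolynomial (Fin (n + 1)) (ZMod p)) ^ (n + 1 + (s : ℕ)) *
          br p (fun j : Fin (n + 1) => if j = Fin.last n then e j + (s : ℕ) else e j) *
          (rename Fin.castSucc (Q s)) ^ p ^ e (Fin.last n)) +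
        rename Fin.castSucc (br p (e ∘ Fin.castSucc)) * V ^ p ^ e (Fin.last n))
      = (∑ s : Fin n, ((-1 : MvPolynomial (Fin (n + 1)) (ZMod p)) ^ (n + 1 + (s : ℕ)) *
          (rename Fin.castSucc (Ls p n (s : ℕ))) ^ p ^ e (Fin.last n)) *
          br p (fun j : Fin (n + 1) => if j = Fin.last n then e j + (s : ℕ) else e j)) +
        rename Fin.castSucc (br p (e ∘ Fin.castSucc)) *
          (Lpoly p (n + 1)) ^ p ^ e (Fin.last n) := by
    rw [mul_add, Finset.mul_sum]
    congr 1
    · refine Finset.sum_congr rfl fun s _ => ?_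
      rw [← hQ s, map_mul, ← hLdef, mul_pow]
      ring
    · rw [← hV, mul_pow]
      ring
  rw [rhs]
  calc L ^ p ^ e (Fin.last n) *
        br p (fun j : Fin (n + 1) => if j = Fin.last n then e j + n else e j)
      = (A.updateCol (Fin.last n)
          (fun i => L ^ p ^ e (Fin.last n) *
            (X i : MvPolynomial (Fin (n + 1)) (ZMod p)) ^ p ^ (e (Fin.last n) + n))).det := by
        have h2 := Matrix.det_updateCol_smul A (Fin.last n) (L ^ p ^ e (Fin.last n))
          (fun i => A i (Fin.last n))
        rw [Matrix.updateCol_eq_self] at h2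
        have hcoleq : (fun i => L ^ p ^ e (Fin.last n) *
            (X i : MvPolynomial (Fin (n + 1)) (ZMod p)) ^ p ^ (e (Fin.last n) + n))
            = (L ^ p ^ e (Fin.last n) • fun i => A i (Fin.last n)) := by
          funext i
          simp [hA]
        rw [hbr, ← h2, hcoleq]
    _ = (A.updateCol (Fin.last n)
          ((fun i => (Matrix.of fun a j : Fin (n + 1) =>
              ((if a = Fin.last n then X i else X a) :
                MvPolynomial (Fin (n + 1)) (ZMod p)) ^ p ^ (j : ℕ)).det
              ^ p ^ e (Fin.last n))
           + ∑ s : Fin n, fun i =>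
              ((-1 : MvPolynomial (Fin (n + 1)) (ZMod p)) ^ (n + 1 + (s : ℕ)) *
                (rename Fin.castSucc (Ls p n (s : ℕ))) ^ p ^ e (Fin.last n)) *
                (X i : MvPolynomial (Fin (n + 1)) (ZMod p)) ^
                  p ^ (e (Fin.last n) + (s : ℕ)))).det := by
        have hkeycol : (fun i => L ^ p ^ e (Fin.last n) *
            (X i : MvPolynomial (Fin (n + 1)) (ZMod p)) ^ p ^ (e (Fin.last n) + n))
            = ((fun i => (Matrix.of fun a j : Fin (n + 1) =>
                ((if a = Fin.last n then X i else X a) :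
                  MvPolynomial (Fin (n + 1)) (ZMod p)) ^ p ^ (j : ℕ)).det
                ^ p ^ e (Fin.last n))
             + ∑ s : Fin n, fun i =>
                ((-1 : MvPolynomial (Fin (n + 1)) (ZMod p)) ^ (n + 1 + (s : ℕ)) *
                  (rename Fin.castSucc (Ls p n (s : ℕ))) ^ p ^ e (Fin.last n)) *
                  (X i : MvPolynomial (Fin (n + 1)) (ZMod p)) ^
                    p ^ (e (Fin.last n) + (s : ℕ))) := by
          funext i
          show L ^ p ^ e (Fin.last n) *
            (X i : MvPolynomial (Fin (n + 1)) (ZMod p)) ^ p ^ (e (Fin.last n) + n) = _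
          rw [hLdef, key_lemma p n (e (Fin.last n)) hodd (X i)]
          simp [Finset.sum_apply]
        rw [hkeycol]
    _ = (∑ s : Fin n, ((-1 : MvPolynomial (Fin (n + 1)) (ZMod p)) ^ (n + 1 + (s : ℕ)) *
            (rename Fin.castSucc (Ls p n (s : ℕ))) ^ p ^ e (Fin.last n)) *
            br p (fun j : Fin (n + 1) => if j = Fin.last n then e j + (s : ℕ) else e j)) +
          rename Fin.castSucc (br p (e ∘ Fin.castSucc)) *
            (Lpoly p (n + 1)) ^ p ^ e (Fin.last n) := by
        rw [Matrix.det_updateCol_add, det_updateColumn_sum', hFdet]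
        have hterm : ∀ s : Fin n,
            (A.updateCol (Fin.last n) fun i =>
              ((-1 : MvPolynomial (Fin (n + 1)) (ZMod p)) ^ (n + 1 + (s : ℕ)) *
                (rename Fin.castSucc (Ls p n (s : ℕ))) ^ p ^ e (Fin.last n)) *
                (X i : MvPolynomial (Fin (n + 1)) (ZMod p)) ^
                  p ^ (e (Fin.last n) + (s : ℕ))).det
            = ((-1 : MvPolynomial (Fin (n + 1)) (ZMod p)) ^ (n + 1 + (s : ℕ)) *
                (rename Fin.castSucc (Ls p n (s : ℕ))) ^ p ^ e (Fin.last n)) *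
                br p (fun j : Fin (n + 1) =>
                  if j = Fin.last n then e j + (s : ℕ) else e j) := by
          intro s
          rw [show (fun i => ((-1 : MvPolynomial (Fin (n + 1)) (ZMod p)) ^ (n + 1 + (s : ℕ)) *
                (rename Fin.castSucc (Ls p n (s : ℕ))) ^ p ^ e (Fin.last n)) *
                (X i : MvPolynomial (Fin (n + 1)) (ZMod p)) ^ p ^ (e (Fin.last n) + (s : ℕ)))
              = ((-1 : MvPolynomial (Fin (n + 1)) (ZMod p)) ^ (n + 1 + (s : ℕ)) *
                (rename Fin.castSucc (Ls p n (s : ℕ))) ^ p ^ e (Fin.last n)) •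
                (fun i => (X i : MvPolynomial (Fin (n + 1)) (ZMod p)) ^
                  p ^ (e (Fin.last n) + (s : ℕ))) from rfl,
            Matrix.det_updateCol_smul, hcol]
        rw [Finset.sum_congr rfl (fun s _ => hterm s)]
        exact add_comm _ _
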